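/- The function x ↦ log Γ̃(x) is convex on (0, ∞). -/

import Mathlib

noncomputable def Gammat (x : ℝ) : ℝ :=
  Real.Gamma (x / 2) * Real.sqrt Real.pi / (2 * Real.Gamma ((x + 1) / 2))

open Real MeasureTheory Set Filter

noncomputable def betaF (u : ℝ) : ℝ :=
  ∫ x in Set.Ioo (0:ℝ) 1, x ^ (u - 1) * (1 - x) ^ (-(1/2) : ℝ)

lemma betaF_integrable {u : ℝ} (hu : 0 < u) :
    IntegrableOn (fun x : ℝ => x ^ (u - 1) * (1 - x) ^ (-(1/2) : ℝ)) (Set.Ioo 0 1) := by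
  have h := (Complex.betaIntegral_convergent (u := (u:ℂ)) (v := (1/2 : ℂ))
    (by simpa using hu) (by norm_num)).norm
  rw [intervalIntegrable_iff_integrableOn_Ioc_of_le zero_le_one] at h
  refine ((h.mono_set Set.Ioo_subset_Ioc_self).congr_fun ?_ measurableSet_Ioo)
  intro x hx
  have hx0 : (0:ℝ) < x := hx.1
  have hx1 : (0:ℝ) < 1 - x := by linarith [hx.2]
  have e1 : ‖(x:ℂ) ^ ((u:ℂ) - 1)‖ = x ^ (u - 1) := by
    rw [Complex.norm_cpow_eq_rpow_re_of_pos hx0]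
    norm_num
  have e2 : ‖(1 - (x:ℂ)) ^ ((1/2:ℂ) - 1)‖ = (1 - x) ^ (-(1/2) : ℝ) := by
    have : (1 - (x:ℂ)) = ((1 - x : ℝ) : ℂ) := by push_cast; ring
    rw [this, Complex.norm_cpow_eq_rpow_re_of_pos hx1]
    norm_num
  simp only [norm_mul, e1, e2]

lemma betaF_eq {u : ℝ} (hu : 0 < u) :
    betaF u = Real.Gamma u * Real.sqrt Real.pi / Real.Gamma (u + 1/2) := by
  have h1 : Complex.betaIntegral (u:ℂ) (1/2) = ((betaF u : ℝ) : ℂ) := by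
    rw [Complex.betaIntegral, intervalIntegral.integral_of_le zero_le_one,
      MeasureTheory.integral_Ioc_eq_integral_Ioo]
    rw [show ((betaF u : ℝ) : ℂ) = ∫ x in Set.Ioo (0:ℝ) 1,
        ((x ^ (u - 1) * (1 - x) ^ (-(1/2) : ℝ) : ℝ) : ℂ) from (integral_ofReal).symm]
    refine setIntegral_congr_fun measurableSet_Ioo fun x hx => ?_
    have hx0 : (0:ℝ) ≤ x := hx.1.le
    have hx1 : (0:ℝ) ≤ 1 - x := by linarith [hx.2.le]
    have e1 : (x:ℂ) ^ ((u:ℂ) - 1) = ((x ^ (u-1) : ℝ) : ℂ) := by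
      rw [show ((u:ℂ) - 1) = ((u - 1 : ℝ) : ℂ) by push_cast; ring,
        ← Complex.ofReal_cpow hx0]
    have e2 : (1 - (x:ℂ)) ^ ((1/2:ℂ) - 1) = (((1-x) ^ (-(1/2):ℝ) : ℝ) : ℂ) := by
      rw [show (1 - (x:ℂ)) = ((1 - x : ℝ) : ℂ) by push_cast; ring,
        show ((1/2:ℂ) - 1) = ((-(1/2) : ℝ) : ℂ) by push_cast; norm_num,
        ← Complex.ofReal_cpow hx1]
    rw [e1, e2]; push_cast; ring
  have h2 := Complex.Gamma_mul_Gamma_eq_betaIntegral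
    (s := (u:ℂ)) (t := (1/2:ℂ)) (by simpa using hu) (by norm_num)
  rw [h1] at h2
  have h3 : Real.Gamma u * Real.Gamma (1/2) = Real.Gamma (u + 1/2) * betaF u := by
    have := h2
    rw [show ((u:ℂ) + 1/2) = ((u + 1/2 : ℝ) : ℂ) by push_cast; ring,
      show ((1:ℂ)/2) = ((1/2 : ℝ) : ℂ) by push_cast; ring,
      Complex.Gamma_ofReal, Complex.Gamma_ofReal, Complex.Gamma_ofReal] at this
    exact_mod_cast this
  have hpos : Real.Gamma (u + 1/2) ≠ 0 := (Real.Gamma_pos_of_pos (by linarith)).ne'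
  rw [Real.Gamma_one_half_eq] at h3
  field_simp at h3 ⊢
  linarith [h3]

lemma betaF_mul_le {s t a b : ℝ} (hs : 0 < s) (ht : 0 < t) (ha : 0 < a) (hb : 0 < b)
    (hab : a + b = 1) : betaF (a * s + b * t) ≤ betaF s ^ a * betaF t ^ b := by
  let f : ℝ → ℝ → ℝ → ℝ := fun c u x => x ^ (c * (u - 1)) * (1 - x) ^ (c * (-(1/2) : ℝ))
  have e : Real.HolderConjugate (1 / a) (1 / b) := Real.holderConjugate_one_div ha hb hab
  have hab' : b = 1 - a := by linarith
  have hst : 0 < a * s + b * t := by positivity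
  have posf : ∀ c u x : ℝ, x ∈ Set.Ioo (0:ℝ) 1 → 0 ≤ f c u x := fun c u x hx =>
    mul_nonneg (rpow_nonneg hx.1.le _) (rpow_nonneg (by linarith [hx.2] : (0:ℝ) ≤ 1 - x) _)
  have posf' : ∀ c u : ℝ, ∀ᵐ x : ℝ ∂volume.restrict (Set.Ioo 0 1), 0 ≤ f c u x := fun c u =>
    (ae_restrict_iff' measurableSet_Ioo).mpr (ae_of_all _ (posf c u))
  have fpow : ∀ {c x : ℝ}, 0 < c → ∀ (u : ℝ), x ∈ Set.Ioo (0:ℝ) 1 →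
      x ^ (u - 1) * (1 - x) ^ (-(1/2) : ℝ) = f c u x ^ (1 / c) := by
    intro c x hc u hx
    dsimp only [f]
    rw [mul_rpow (rpow_nonneg hx.1.le _) (rpow_nonneg (by linarith [hx.2] : (0:ℝ) ≤ 1-x) _),
      ← rpow_mul hx.1.le, ← rpow_mul (by linarith [hx.2] : (0:ℝ) ≤ 1-x)]
    congr 2 <;> field_simp
  have f_mem_Lp : ∀ {c u : ℝ}, 0 < c → 0 < u →
      MemLp (f c u) (ENNReal.ofReal (1 / c)) (volume.restrict (Set.Ioo 0 1)) := by
    intro c u hc hu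
    have A : ENNReal.ofReal (1 / c) ≠ 0 := by
      rwa [Ne, ENNReal.ofReal_eq_zero, not_le, one_div_pos]
    have B : ENNReal.ofReal (1 / c) ≠ ⊤ := ENNReal.ofReal_ne_top
    rw [← memLp_norm_rpow_iff _ A B, ENNReal.toReal_ofReal (one_div_nonneg.mpr hc.le),
      ENNReal.div_self A B, memLp_one_iff_integrable]
    · apply Integrable.congr (betaF_integrable hu)
      refine eventuallyEq_of_mem (self_mem_ae_restrict measurableSet_Ioo) fun x hx => ?_
      rw [fpow hc u hx]
      congr 1
      exact (norm_of_nonneg (posf _ _ x hx)).symm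
    · refine ContinuousOn.aestronglyMeasurable ?_ measurableSet_Ioo
      refine ContinuousOn.mul (fun x hx => ?_) (fun x hx => ?_)
      · exact (Real.continuousAt_rpow_const _ _ (Or.inl hx.1.ne')).continuousWithinAt
      · refine ContinuousAt.continuousWithinAt ?_
        exact (Real.continuousAt_rpow_const _ _
            (Or.inl (by linarith [hx.2] : (1:ℝ) - x ≠ 0))).comp
          ((continuous_const.sub continuous_id).continuousAt)
  rw [betaF, betaF, betaF]
  convert MeasureTheory.integral_mul_le_Lp_mul_Lq_of_nonneg e (posf' a s) (posf' b t)
      (f_mem_Lp ha hs) (f_mem_Lp hb ht) using 1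
  · refine setIntegral_congr_fun measurableSet_Ioo fun x hx => ?_
    dsimp only [f]
    have h1x : (0:ℝ) < 1 - x := by linarith [hx.2]
    have A : x ^ (a * s + b * t - 1) = x ^ (a * (s - 1)) * x ^ (b * (t - 1)) := by
      rw [← rpow_add hx.1]; congr 1; rw [hab']; ring
    have B : (1 - x) ^ (-(1/2) : ℝ)
        = (1 - x) ^ (a * (-(1/2) : ℝ)) * (1 - x) ^ (b * (-(1/2) : ℝ)) := by
      rw [← rpow_add h1x, ← add_mul, hab, one_mul]
    rw [A, B]; ring
  · rw [one_div_one_div, one_div_one_div]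
    congr 2 <;> exact setIntegral_congr_fun measurableSet_Ioo fun x hx => fpow (by assumption) _ hx

lemma betaF_pos {u : ℝ} (hu : 0 < u) : 0 < betaF u := by
  rw [betaF_eq hu]
  have := Real.Gamma_pos_of_pos hu
  have := Real.Gamma_pos_of_pos (by linarith : (0:ℝ) < u + 1/2)
  have := Real.sqrt_pos.mpr Real.pi_pos
  positivity

lemma convexOn_log_betaF : ConvexOn ℝ (Set.Ioi 0) (Real.log ∘ betaF) := by
  refine convexOn_iff_forall_pos.mpr ⟨convex_Ioi _, fun x hx y hy a b ha hb hab => ?_⟩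
  have : b = 1 - a := by linarith
  subst this
  simp_rw [Function.comp_apply, smul_eq_mul]
  simp only [Set.mem_Ioi] at hx hy
  rw [← log_rpow (betaF_pos hx), ← log_rpow (betaF_pos hy), ← log_mul]
  · exact log_le_log (betaF_pos (by positivity)) (betaF_mul_le hx hy ha hb hab)
  · exact (rpow_pos_of_pos (betaF_pos hx) _).ne'
  · exact (rpow_pos_of_pos (betaF_pos hy) _).ne'

theorem Gammat_log_convex :
    ConvexOn ℝ (Set.Ioi (0 : ℝ)) (fun x => Real.log (Gammat x)) := by
  have h1 : ConvexOn ℝ (Set.Ioi (0:ℝ)) fun x => Real.log (betaF (x / 2)) := by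
    convert! convexOn_log_betaF.comp_affineMap
      (DistribSMul.toLinearMap ℝ ℝ (1 / 2 : ℝ)).toAffineMap using 1
    · simpa only [zero_div] using! (Set.preimage_const_mul_Ioi₀ (0 : ℝ) one_half_pos).symm
    · ext1 x
      simp only [LinearMap.coe_toAffineMap, Function.comp_apply,
        DistribSMul.toLinearMap_apply]
      rw [smul_eq_mul, mul_comm, mul_one_div]
  refine (h1.sub (concaveOn_const (Real.log 2) (convex_Ioi 0))).congr fun x hx => ?_
  have hx' : (0:ℝ) < x := hx
  have hx2 : (0:ℝ) < x / 2 := by linarith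
  have heq : Gammat x = betaF (x / 2) / 2 := by
    rw [Gammat, betaF_eq hx2, show x / 2 + 1/2 = (x + 1) / 2 by ring]
    field_simp
  simp only [Pi.sub_apply]
  rw [heq, Real.log_div (betaF_pos hx2).ne' two_ne_zero]
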